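/- For all natural numbers M, n ≥ 0, the following identity holds in ℚ⟦q⟧: 1/((q;q)_{M+n}(q;q)_n) = Σ_{k=0}^{n} q^{k²+Mk}/((q;q)_{n−k}(q;q)_{k+M}(q;q)_k). -/

import Mathlib

/- Common setup: work in the ring of formal power series ℚ⟦q⟧.
Infinite sums/products are taken coefficientwise: this agrees with convergence
in the q-adic topology, since in each case the coefficient of q^N only receives
finitely many nonzero contributions. -/

open PowerSeries

noncomputable section

/-- The formal variable `q`. -/
abbrev q : PowerSeries ℚ := PowerSeries.X

/-- The finite q-Pochhammer symbol `(q^a; q)_n = ∏_{k=0}^{n-1} (1 - q^{a+k})`. -/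
def qPoch (a n : ℕ) : PowerSeries ℚ := ∏ k ∈ Finset.range n, (1 - q ^ (a + k))

/-- The infinite q-Pochhammer symbol `(q^a; q)_∞ = ∏_{k≥0} (1 - q^{a+k})` (for `a ≥ 1`),
defined coefficientwise: the coefficient of `q^N` in the partial products stabilizes
once at least `N+1` factors are taken. -/
def qPochInf (a : ℕ) : PowerSeries ℚ :=
  PowerSeries.mk fun N => PowerSeries.coeff N (qPoch a (N + 1))

/-- The coefficientwise (q-adic) sum of a family of formal power series: the coefficient
of `q^N` of the sum is the (finitely supported) sum of the `q^N`-coefficients. -/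
def qSum {ι : Type*} (f : ι → PowerSeries ℚ) : PowerSeries ℚ :=
  PowerSeries.mk fun N => ∑ᶠ i, PowerSeries.coeff N (f i)

/-- `Φ₁ = Σ_{n≥1} n q^n/(1-q^n)` (the `n = 0` summand vanishes). -/
def Phi1 : PowerSeries ℚ :=
  qSum fun n : ℕ => (n : PowerSeries ℚ) * q ^ n * (1 - q ^ n)⁻¹

/-! ### Auxiliary lemmas -/

lemma qPoch_zero' (a : ℕ) : qPoch a 0 = 1 := Finset.prod_range_zero _

lemma qPoch_succ (a n : ℕ) : qPoch a (n + 1) = qPoch a n * (1 - q ^ (a + n)) :=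
  Finset.prod_range_succ _ _

lemma qPoch_succ' (a n : ℕ) : qPoch a (n + 1) = (1 - q ^ a) * qPoch (a + 1) n := by
  rw [qPoch, Finset.prod_range_succ', qPoch]
  simp [mul_comm, add_assoc, add_comm 1]

lemma qPoch_add (a m n : ℕ) : qPoch a (m + n) = qPoch a m * qPoch (a + m) n := by
  rw [qPoch, Finset.prod_range_add, qPoch, qPoch]
  congr 1
  refine Finset.prod_congr rfl fun k _ => ?_
  ring_nf

lemma constCoeff_qPoch (a n : ℕ) (ha : 1 ≤ a) :
    constantCoeff (qPoch a n) = 1 := by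
  rw [qPoch, map_prod]
  refine Finset.prod_eq_one fun k _ => ?_
  rw [map_sub, map_one, map_pow, constantCoeff_X, zero_pow (by omega), sub_zero]

lemma qPoch_ne_zero (a n : ℕ) (ha : 1 ≤ a) : qPoch a n ≠ 0 := by
  intro h
  have := constCoeff_qPoch a n ha
  rw [h, map_zero] at this
  exact one_ne_zero this.symm

lemma qPoch_mul_inv (n : ℕ) : qPoch 1 n * (qPoch 1 n)⁻¹ = 1 :=
  PowerSeries.mul_inv_cancel _ (by rw [constCoeff_qPoch 1 n le_rfl]; exact one_ne_zero)

/-- The Gaussian binomial coefficient as a power series (polynomial), via the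
q-Pascal recursion `gb (n+1) (k+1) = q^(k+1) * gb n (k+1) + gb n k`. -/
def gb : ℕ → ℕ → PowerSeries ℚ
  | _, 0 => 1
  | 0, _ + 1 => 0
  | n + 1, k + 1 => q ^ (k + 1) * gb n (k + 1) + gb n k

lemma gb_zero : ∀ n k : ℕ, n < k → gb n k = 0 := by
  intro n
  induction n with
  | zero => intro k hk; match k, hk with | k + 1, _ => rfl
  | succ n ih =>
    intro k hk
    match k, hk with
    | k + 1, hk =>
      show q ^ (k + 1) * gb n (k + 1) + gb n k = 0
      rw [ih (k+1) (by omega), ih k (by omega), mul_zero, add_zero]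

lemma gb_n_zero (n : ℕ) : gb n 0 = 1 := by cases n <;> rfl

/-- `(q;q)_k (q;q)_{n-k} [n k]_q = (q;q)_n`. -/
lemma gb_mul : ∀ n k : ℕ, k ≤ n →
    gb n k * (qPoch 1 k * qPoch 1 (n - k)) = qPoch 1 n := by
  intro n
  induction n with
  | zero => intro k hk; interval_cases k; simp [gb_n_zero, qPoch_zero']
  | succ n ih =>
    intro k hk
    match k with
    | 0 => rw [gb_n_zero, qPoch_zero', one_mul, one_mul, Nat.sub_zero]
    | k + 1 =>
      show (q ^ (k + 1) * gb n (k + 1) + gb n k) * _ = _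
      have e1 : 1 + k = k + 1 := Nat.add_comm 1 k
      have hq : qPoch 1 (k + 1) = qPoch 1 k * (1 - q ^ (k + 1)) := by
        rw [qPoch_succ, e1]
      have hnk : n + 1 - (k + 1) = n - k := by omega
      have hQn : qPoch 1 (n + 1) = qPoch 1 n * (1 - q ^ (n + 1)) := by
        rw [qPoch_succ, Nat.add_comm 1 n]
      rcases Nat.lt_or_ge k n with h | h
      · have h1 := ih (k + 1) (by omega)
        have h2 := ih k (by omega)
        have hnk1 : n - k = (n - (k + 1)) + 1 := by omega
        have hq2 : qPoch 1 (n - k) = qPoch 1 (n - (k+1)) * (1 - q ^ (n - k)) := by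
          have e2 : 1 + (n - (k + 1)) = n - k := by omega
          conv_lhs => rw [hnk1, qPoch_succ]
          rw [e2]
        have hpow : q ^ (k + 1) * q ^ (n - k) = q ^ (n + 1) := by
          rw [← pow_add]; congr 1; omega
        rw [hnk, hQn, hq2, hq]
        calc (q ^ (k+1) * gb n (k+1) + gb n k) * (qPoch 1 k * (1 - q^(k+1)) * (qPoch 1 (n-(k+1)) * (1 - q^(n-k))))
            = q^(k+1) * (1 - q^(n-k)) * (gb n (k+1) * (qPoch 1 (k+1) * qPoch 1 (n-(k+1))))
              + (1 - q^(k+1)) * (gb n k * (qPoch 1 k * qPoch 1 (n-k))) := by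
              rw [hq, hq2]; ring
          _ = q^(k+1) * (1 - q^(n-k)) * qPoch 1 n + (1 - q^(k+1)) * qPoch 1 n := by rw [h1, h2]
          _ = qPoch 1 n * (1 - q^(n+1)) := by linear_combination (-(qPoch 1 n)) * hpow
      · obtain rfl : k = n := by omega
        rw [gb_zero k (k+1) (by omega), mul_zero, zero_add, hnk, Nat.sub_self,
          qPoch_zero', mul_one, hQn]
        have h2 := ih k le_rfl
        rw [Nat.sub_self, qPoch_zero', mul_one] at h2
        linear_combination (1 - q ^ (k+1)) * h2

/-- Summand of the cleared-denominator identity. -/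
def Tm (M n k : ℕ) : PowerSeries ℚ := q^(k^2+(M+1)*k) * gb n k * qPoch (M+k+2) (n-k)

/-- Telescoping auxiliary term. -/
def Am (M n k : ℕ) : PowerSeries ℚ := (1 - q^(M+k+1)) * Tm M n k

/-- The cleared-denominator form of equation (3.6):
`Σ_{k=0}^n q^{k(k+M)} [n k]_q (q^{M+k+1};q)_{n-k} = 1`. -/
lemma key : ∀ n M : ℕ,
    ∑ k ∈ Finset.range (n+1), q^(k^2 + M*k) * gb n k * qPoch (M+k+1) (n-k) = 1 := by
  intro n
  induction n with
  | zero => intro M; simp [gb_n_zero, qPoch_zero']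
  | succ n ih =>
    intro M
    have hTsum : ∑ k ∈ Finset.range (n+1), Tm M n k = 1 := by
      rw [← ih (M+1)]
      refine Finset.sum_congr rfl fun k _ => ?_
      rw [Tm, show M+1+k+1 = M+k+2 from by omega]
    have claim : ∀ k ∈ Finset.range (n+1),
        q^((k+1)^2 + M*(k+1)) * gb (n+1) (k+1) * qPoch (M+(k+1)+1) (n+1-(k+1))
          = (Am M n (k+1) - Am M n k) + Tm M n k := by
      intro k hk
      have hk' : k ≤ n := by
        have := Finset.mem_range.mp hk; omega
      have hgb : gb (n+1) (k+1) = q^(k+1) * gb n (k+1) + gb n k := rfl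
      have hnk : n + 1 - (k+1) = n - k := by omega
      have harg : M + (k+1) + 1 = M + k + 2 := by omega
      have hpb : q^(k^2+(M+1)*k) * q^(M+k+1) = q^((k+1)^2 + M*(k+1)) := by
        rw [← pow_add]; congr 1; ring
      have hpa : q^((k+1)^2 + M*(k+1)) * q^(k+1) = q^((k+1)^2+(M+1)*(k+1)) := by
        rw [← pow_add]; congr 1; ring
      rw [hgb, hnk, harg]; simp only [Am, Tm]
      rcases Nat.lt_or_ge k n with h | h
      · have hsplit : qPoch (M+k+2) (n-k) = (1 - q^(M+k+2)) * qPoch (M+k+3) (n-(k+1)) := by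
          rw [show n - k = (n-(k+1))+1 from by omega, qPoch_succ',
            show M+k+2+1 = M+k+3 from by omega]
        rw [show M+(k+1)+2 = M+k+3 from by omega]
        rw [hsplit]
        linear_combination ((1 - q^(M+k+2)) * qPoch (M+k+3) (n-(k+1)) * gb n (k+1)) * hpa
          - ((1 - q^(M+k+2)) * qPoch (M+k+3) (n-(k+1)) * gb n k) * hpb
      · obtain rfl : k = n := by omega
        rw [gb_zero k (k+1) (by omega), Nat.sub_self, qPoch_zero']
        simp only [mul_zero, zero_mul, add_zero, mul_one]
        linear_combination (gb k k) * hpb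
    rw [Finset.sum_range_succ' _ (n+1), Finset.sum_congr rfl claim,
      Finset.sum_add_distrib, Finset.sum_range_sub (fun k => Am M n k), hTsum]
    rw [show Am M n (n+1) = 0 from by
      rw [Am, Tm, gb_zero n (n+1) (by omega)]; ring]
    rw [Am, Tm, gb_n_zero, Nat.sub_zero, gb_n_zero,
      show (0:ℕ)^2 + (M+1)*0 = 0 from by ring, show (0:ℕ)^2 + M*0 = 0 from by ring,
      show M+0+1 = M+1 from by omega, show M+0+2 = M+2 from by omega,
      Nat.sub_zero, qPoch_succ' (M+1) n, show M+1+1 = M+2 from by omega]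
    ring

/-- Equation (3.6): for all `M, n ≥ 0`,
`1/((q;q)_{M+n}(q;q)_n) = Σ_{k=0}^{n} q^{k²+Mk}/((q;q)_{n-k}(q;q)_{k+M}(q;q)_k)`. -/
theorem patkowski_eq_3_6 (M n : ℕ) :
    (qPoch 1 (M + n))⁻¹ * (qPoch 1 n)⁻¹ =
      ∑ k ∈ Finset.range (n + 1), q ^ (k ^ 2 + M * k) *
        ((qPoch 1 (n - k))⁻¹ * (qPoch 1 (k + M))⁻¹ * (qPoch 1 k)⁻¹) := by
  have perterm : ∀ k ∈ Finset.range (n + 1),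
      q ^ (k ^ 2 + M * k) *
        ((qPoch 1 (n - k))⁻¹ * (qPoch 1 (k + M))⁻¹ * (qPoch 1 k)⁻¹)
      = (q^(k^2 + M*k) * gb n k * qPoch (M+k+1) (n-k)) *
          ((qPoch 1 (M + n))⁻¹ * (qPoch 1 n)⁻¹) := by
    intro k hk
    have hk' : k ≤ n := by have := Finset.mem_range.mp hk; omega
    have hne : qPoch 1 (M+n) * qPoch 1 n ≠ 0 :=
      mul_ne_zero (qPoch_ne_zero _ _ le_rfl) (qPoch_ne_zero _ _ le_rfl)
    refine mul_right_cancel₀ hne ?_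
    have hMn : qPoch 1 (M+n) = qPoch 1 (k+M) * qPoch (M+k+1) (n-k) := by
      have h := qPoch_add 1 (k+M) (n-k)
      rw [show (k+M)+(n-k) = M+n from by omega, show 1+(k+M) = M+k+1 from by omega] at h
      exact h
    have hgb := gb_mul n k hk'
    have h1 := qPoch_mul_inv (n-k)
    have h2 := qPoch_mul_inv (k+M)
    have h3 := qPoch_mul_inv k
    have h4 := qPoch_mul_inv (M+n)
    have h5 := qPoch_mul_inv n
    set x := q^(k^2+M*k)
    set A := qPoch 1 (n-k)
    set B := qPoch 1 (k+M)
    set C := qPoch 1 k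
    set D := qPoch 1 (M+n)
    set E := qPoch 1 n
    set g := gb n k
    set Q := qPoch (M+k+1) (n-k)
    linear_combination (x*A⁻¹*B⁻¹*C⁻¹*E) * hMn - (x*A⁻¹*B⁻¹*C⁻¹*B*Q) * hgb
      + (x*g*Q*(B*B⁻¹)*(C*C⁻¹)) * h1 + (x*g*Q*(C*C⁻¹)) * h2 + (x*g*Q) * h3
      - (x*g*Q*(E*E⁻¹)) * h4 - (x*g*Q) * h5
  rw [Finset.sum_congr rfl perterm, ← Finset.sum_mul, key n M, one_mul]

end
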